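/- Let V, W be positive definite d×d matrices with V ⪯ W and det(W) ≤ (1+C) det(V) for some C > 0. Then for every x ∈ R^d, ‖x‖²_{V⁻¹} ≤ (1+C) ‖x‖²_{W⁻¹}. -/

import Mathlib

open Matrix Finset
open scoped MatrixOrder

lemma dot_sum_smul {d m : ℕ} (y : Fin d → ℝ) (a : Fin m → ℝ) (u : Fin m → Fin d → ℝ) :
    y ⬝ᵥ (∑ i, a i • u i) = ∑ i, a i * (y ⬝ᵥ u i) := by
  simp only [dotProduct, Finset.sum_apply, Pi.smul_apply, smul_eq_mul, Finset.mul_sum]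
  rw [Finset.sum_comm]
  apply Finset.sum_congr rfl; intro i _
  apply Finset.sum_congr rfl; intro k _
  ring

lemma mulVec_dot {d : ℕ} (N : Matrix (Fin d) (Fin d) ℝ) (x v : Fin d → ℝ) :
    (N *ᵥ x) ⬝ᵥ v = x ⬝ᵥ (Nᵀ *ᵥ v) := by
  rw [dotProduct_comm, dotProduct_mulVec, ← mulVec_transpose, dotProduct_comm]

lemma aux_quadform {d : ℕ} (A : Matrix (Fin d) (Fin d) ℝ) (hA : A.PosDef)
    (h1 : (1 - A).PosSemidef) (y : Fin d → ℝ) :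
    y ⬝ᵥ A⁻¹.mulVec y ≤ (A.det)⁻¹ * (y ⬝ᵥ y) := by
  classical
  set b := hA.1.eigenvectorBasis with hb
  set μ := hA.1.eigenvalues with hμ
  have hμpos : ∀ i, 0 < μ i := fun i => hA.eigenvalues_pos i
  have hdot : ∀ i j, (⇑(b i) : Fin d → ℝ) ⬝ᵥ (⇑(b j) : Fin d → ℝ) = if i = j then 1 else 0 := by
    intro i j
    have := (orthonormal_iff_ite.mp b.orthonormal) i j
    simpa [PiLp.inner_apply, dotProduct, mul_comm] using this
  have heig : ∀ i, A *ᵥ ⇑(b i) = μ i • ⇑(b i) := fun i => hA.1.mulVec_eigenvectorBasis i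
  have hμle : ∀ i, μ i ≤ 1 := by
    intro i
    have h0 := h1.dotProduct_mulVec_nonneg (⇑(b i))
    simp only [sub_mulVec, one_mulVec, dotProduct_sub, heig i, dotProduct_smul,
      star_trivial, hdot i i, if_pos rfl, smul_eq_mul, mul_one] at h0
    norm_num at h0
    linarith
  have hdetunit : IsUnit A.det := hA.det_pos.ne'.isUnit
  have hinv : ∀ i, A⁻¹ *ᵥ ⇑(b i) = (μ i)⁻¹ • ⇑(b i) := by
    intro i
    have h2 : A⁻¹ *ᵥ (A *ᵥ ⇑(b i)) = ⇑(b i) := by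
      rw [mulVec_mulVec, Matrix.nonsing_inv_mul _ hdetunit, one_mulVec]
    rw [heig i, mulVec_smul] at h2
    have h3 := congrArg (fun w => (μ i)⁻¹ • w) h2
    simpa [smul_smul, inv_mul_cancel₀ (hμpos i).ne'] using h3
  set c : Fin d → ℝ := fun i => (⇑(b i) : Fin d → ℝ) ⬝ᵥ y with hc
  have hy : y = ∑ i, c i • (⇑(b i) : Fin d → ℝ) := by
    have hrepr := b.sum_repr' (WithLp.toLp 2 y)
    have h2 : ∀ i, (inner ℝ (b i) (WithLp.toLp 2 y) : ℝ) = c i := by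
      intro i; simp [PiLp.inner_apply, dotProduct, hc, mul_comm]
    funext k
    show (WithLp.toLp 2 y).ofLp k = _
    conv_lhs => rw [← hrepr]
    have hsum : ∀ (f : Fin d → EuclideanSpace ℝ (Fin d)),
        (∑ i, f i) k = ∑ i, f i k := fun f => by rw [WithLp.ofLp_sum]; exact Finset.sum_apply k Finset.univ _
    rw [hsum]
    simp [h2]
  have hydot : ∀ i, y ⬝ᵥ (⇑(b i) : Fin d → ℝ) = c i := by
    intro i; rw [dotProduct_comm]
  have hAy : A⁻¹ *ᵥ y = ∑ i, (c i * (μ i)⁻¹) • (⇑(b i) : Fin d → ℝ) := by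
    conv_lhs => rw [hy]
    rw [← mulVecLin_apply, map_sum]
    simp [mulVecLin_apply, hinv, smul_smul]
  have hq1 : y ⬝ᵥ A⁻¹.mulVec y = ∑ i, (c i)^2 * (μ i)⁻¹ := by
    rw [show A⁻¹.mulVec y = A⁻¹ *ᵥ y from rfl, hAy, dot_sum_smul]
    apply Finset.sum_congr rfl; intro i _
    rw [hydot i]; ring
  have hq2 : y ⬝ᵥ y = ∑ i, (c i)^2 := by
    nth_rewrite 2 [hy]
    rw [dot_sum_smul]
    apply Finset.sum_congr rfl; intro i _
    rw [hydot i]; ring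
  have hdet : (A.det)⁻¹ = ∏ i, (μ i)⁻¹ := by
    rw [hA.1.det_eq_prod_eigenvalues, ← Finset.prod_inv_distrib]
    norm_num
    rfl
  have hbound : ∀ i, (μ i)⁻¹ ≤ ∏ j, (μ j)⁻¹ := by
    intro i
    have h5 : (1:ℝ) ≤ ∏ j ∈ Finset.univ.erase i, (μ j)⁻¹ := by
      have := Finset.prod_le_prod (s := Finset.univ.erase i) (f := fun _ => (1:ℝ))
        (g := fun j => (μ j)⁻¹) (by simp) (fun j _ => (one_le_inv₀ (hμpos j)).mpr (hμle j))
      simpa using this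
    calc (μ i)⁻¹ = (μ i)⁻¹ * 1 := (mul_one _).symm
      _ ≤ (μ i)⁻¹ * ∏ j ∈ Finset.univ.erase i, (μ j)⁻¹ :=
          mul_le_mul_of_nonneg_left h5 (inv_nonneg.mpr (hμpos i).le)
      _ = ∏ j, (μ j)⁻¹ := Finset.mul_prod_erase Finset.univ (fun j => (μ j)⁻¹) (Finset.mem_univ i)
  rw [hq1, hq2, hdet, Finset.mul_sum]
  apply Finset.sum_le_sum
  intro i _
  rw [mul_comm ((c i)^2)]
  exact mul_le_mul_of_nonneg_right (hbound i) (sq_nonneg _)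

/-- **Lazy design matrix comparison.** If `V ⪯ W` are positive definite with
`det W ≤ (1+C) det V` for some `C > 0`, then for every `x`,
`‖x‖²_{V⁻¹} ≤ (1+C) ‖x‖²_{W⁻¹}`. -/
theorem inv_quadform_le_of_det_ratio
    {d : ℕ} (V W : Matrix (Fin d) (Fin d) ℝ)
    (hV : V.PosDef) (hW : W.PosDef) (hVW : (W - V).PosSemidef)
    {C : ℝ} (hC : 0 < C) (hdet : W.det ≤ (1 + C) * V.det) (x : Fin d → ℝ) :
    x ⬝ᵥ V⁻¹.mulVec x ≤ (1 + C) * (x ⬝ᵥ W⁻¹.mulVec x) := by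
  classical
  set S := CFC.sqrt W with hSdef
  have hS : S.PosSemidef := Matrix.nonneg_iff_posSemidef.mp (CFC.sqrt_nonneg W)
  have hSS : S * S = W := CFC.sqrt_mul_sqrt_self W hW.posSemidef.nonneg
  have hSW : S.det * S.det = W.det := by rw [← det_mul, hSS]
  have hdetS : S.det ≠ 0 := by
    intro h
    exact hW.det_pos.ne' (by rw [← hSW, h, mul_zero])
  have hSu : IsUnit S.det := hdetS.isUnit
  have hSinvS : S⁻¹ * S = 1 := Matrix.nonsing_inv_mul _ hSu
  have hSSinv : S * S⁻¹ = 1 := Matrix.mul_nonsing_inv _ hSu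
  have hSh : Sᴴ = S := hS.1
  have hSinvh : (S⁻¹)ᴴ = S⁻¹ := by rw [Matrix.conjTranspose_nonsing_inv, hSh]
  have hSinvt : (S⁻¹)ᵀ = S⁻¹ := by
    rw [← conjTranspose_eq_transpose_of_trivial]; exact hSinvh
  set A := S⁻¹ * V * S⁻¹ with hAdef
  have hA : A.PosDef := by
    refine Matrix.PosDef.of_dotProduct_mulVec_pos ?_ ?_
    · rw [hAdef]
      nth_rewrite 1 [← hSinvh]
      exact isHermitian_conjTranspose_mul_mul _ hV.1
    · intro z hz
      have hz' : S⁻¹ *ᵥ z ≠ 0 := by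
        intro h
        apply hz
        have h4 : S *ᵥ (S⁻¹ *ᵥ z) = S *ᵥ 0 := by rw [h]
        simpa [mulVec_mulVec, hSSinv] using h4
      have hpos := hV.dotProduct_mulVec_pos hz'
      have hrw : star z ⬝ᵥ A *ᵥ z = star (S⁻¹ *ᵥ z) ⬝ᵥ V *ᵥ (S⁻¹ *ᵥ z) := by
        simp only [star_trivial, hAdef]
        rw [← mulVec_mulVec, ← mulVec_mulVec, mulVec_dot, hSinvt, mulVec_mulVec]
      rwa [hrw]
  have h1A : (1 - A).PosSemidef := by
    have h := hVW.mul_mul_conjTranspose_same S⁻¹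
    have heq : S⁻¹ * (W - V) * (S⁻¹)ᴴ = 1 - A := by
      rw [hSinvh, Matrix.mul_sub, Matrix.sub_mul, hAdef]
      congr 1
      rw [← hSS, ← Matrix.mul_assoc, hSinvS, Matrix.one_mul, hSSinv]
    rwa [heq] at h
  have hAinv : A⁻¹ = S * V⁻¹ * S := by
    rw [hAdef, Matrix.mul_inv_rev, Matrix.mul_inv_rev,
      Matrix.nonsing_inv_nonsing_inv _ hSu, Matrix.mul_assoc]
  have hdetA : A.det = V.det / W.det := by
    rw [hAdef, det_mul, det_mul, Matrix.det_nonsing_inv, Ring.inverse_eq_inv]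
    rw [eq_div_iff hW.det_pos.ne', ← hSW]
    field_simp
  have hdetAinv : (A.det)⁻¹ = W.det / V.det := by
    rw [hdetA, inv_div]
  set y := S⁻¹ *ᵥ x with hy
  have key := aux_quadform A hA h1A y
  have hq1 : y ⬝ᵥ A⁻¹.mulVec y = x ⬝ᵥ V⁻¹.mulVec x := by
    rw [show A⁻¹.mulVec y = A⁻¹ *ᵥ y from rfl, hAinv, hy]
    rw [mulVec_mulVec, mulVec_dot, hSinvt, mulVec_mulVec]
    congr 1
    rw [Matrix.mul_assoc, Matrix.mul_assoc, hSSinv, Matrix.mul_one, ← Matrix.mul_assoc,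
      hSinvS, Matrix.one_mul]
  have hq2 : y ⬝ᵥ y = x ⬝ᵥ W⁻¹.mulVec x := by
    rw [hy, mulVec_dot, hSinvt, mulVec_mulVec]
    congr 2
    rw [← hSS, Matrix.mul_inv_rev]
  rw [hq1, hq2, hdetAinv] at key
  have hWq : 0 ≤ x ⬝ᵥ W⁻¹.mulVec x := by
    have := hW.inv.posSemidef.dotProduct_mulVec_nonneg x
    simpa using this
  have hratio : W.det / V.det ≤ 1 + C := by
    rw [div_le_iff₀ hV.det_pos]
    linarith
  calc x ⬝ᵥ V⁻¹.mulVec x ≤ W.det / V.det * (x ⬝ᵥ W⁻¹.mulVec x) := key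
    _ ≤ (1 + C) * (x ⬝ᵥ W⁻¹.mulVec x) := mul_le_mul_of_nonneg_right hratio hWq
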